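/- Coherence bound for unbiased information transfer: let B ∈ B(K) be self-adjoint, A := T(1 ⊗ B), and Σ := ‖T(1 ⊗ B²) − A²‖^{1/2}. Let ψ_x and ψ_y be unit vectors in H with A ψ_x = x ψ_x and A ψ_y = y ψ_y for real numbers x ≠ y. Then for every orthogonal projection P ∈ B(H), |⟨ψ_x, R(P) ψ_y⟩| ≤ (Σ/|x−y|) / √(1 + 4 (Σ/|x−y|)²). -/

import Mathlib

open ContinuousLinearMap

/-! The Hilbert tensor product `H ⊗ K` is modelled by a Hilbert space `L` together
with two commuting unital ⋆-homomorphisms `ι₁ : B(H) → B(L)` and `ι₂ : B(K) → B(L)`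
(playing the roles of `X ↦ X ⊗ 1` and `Y ↦ 1 ⊗ Y`). Given an isometry
`V : H → L`, the quantum operation is `T(X) = V† X V` and its restriction to the
system is `R(P) = T(ι₁ P)`. -/

variable {H K L : Type*}
  [NormedAddCommGroup H] [InnerProductSpace ℂ H] [CompleteSpace H]
  [NormedAddCommGroup K] [InnerProductSpace ℂ K] [CompleteSpace K]
  [NormedAddCommGroup L] [InnerProductSpace ℂ L] [CompleteSpace L]

/-- The quantum operation `T(X) = V† X V` in Stinespring form. -/
noncomputable def qop (V : H →L[ℂ] L) (X : L →L[ℂ] L) : H →L[ℂ] H :=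
  adjoint V ∘L X ∘L V

open scoped InnerProductSpace

lemma coherence_aux (b d S : ℝ) (hb0 : 0 ≤ b) (hb1 : b ≤ 1) (hd0 : 0 < d)
    (hS0 : 0 ≤ S) (hmain : d * b ≤ 2 * S * Real.sqrt (1 - b ^ 2)) :
    b / 2 ≤ (S / d) / Real.sqrt (1 + 4 * (S / d) ^ 2) := by
  have h2 : Real.sqrt (1 - b ^ 2) ^ 2 = 1 - b ^ 2 := Real.sq_sqrt (by nlinarith)
  have h1 : (d * b) ^ 2 ≤ (2 * S * Real.sqrt (1 - b ^ 2)) ^ 2 :=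
    pow_le_pow_left₀ (mul_nonneg hd0.le hb0) hmain 2
  have hsq : b ^ 2 * (d ^ 2 + 4 * S ^ 2) ≤ 4 * S ^ 2 := by nlinarith [h1, h2]
  set r := Real.sqrt (d ^ 2 + 4 * S ^ 2) with hrdef
  have hr0 : 0 < r := Real.sqrt_pos.mpr (by nlinarith)
  have hr2 : r ^ 2 = d ^ 2 + 4 * S ^ 2 := Real.sq_sqrt (by nlinarith)
  have hbr : b * r ≤ 2 * S := by
    nlinarith [hsq, hr2, mul_nonneg hb0 hr0.le, hS0, sq_nonneg (b * r - 2 * S),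
      sq_nonneg (b * r + 2 * S)]
  have hd : d ≠ 0 := ne_of_gt hd0
  have hkey : 1 + 4 * (S / d) ^ 2 = (d ^ 2 + 4 * S ^ 2) / d ^ 2 := by
    field_simp
  have hrhs : (S / d) / Real.sqrt (1 + 4 * (S / d) ^ 2) = S / r := by
    rw [hkey, Real.sqrt_div (by positivity), Real.sqrt_sq hd0.le, ← hrdef]
    field_simp
  rw [hrhs, div_le_div_iff₀ (by norm_num) hr0]
  linarith

/-- Coherence bound for unbiased information transfer: with `A := T(1 ⊗ B)`,
`Σ := ‖T(1 ⊗ B²) − A²‖^(1/2)`, and eigenvectors `A ψx = x ψx`, `A ψy = y ψy`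
with `x ≠ y`, every orthogonal projection `P` satisfies
`|⟨ψx, R(P) ψy⟩| ≤ (Σ/|x−y|) / √(1 + 4 (Σ/|x−y|)²)`. -/
theorem coherence_bound_unbiased
    (ι₁ : (H →L[ℂ] H) →⋆ₐ[ℂ] (L →L[ℂ] L)) (ι₂ : (K →L[ℂ] K) →⋆ₐ[ℂ] (L →L[ℂ] L))
    (hcomm : ∀ X Y, ι₁ X * ι₂ Y = ι₂ Y * ι₁ X)
    (V : H →L[ℂ] L) (hV : adjoint V ∘L V = 1)
    (B : K →L[ℂ] K) (hB : IsSelfAdjoint B)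
    (ψx ψy : H) (hψx : ‖ψx‖ = 1) (hψy : ‖ψy‖ = 1)
    (x y : ℝ) (hxy : x ≠ y)
    (hx : qop V (ι₂ B) ψx = (x : ℂ) • ψx) (hy : qop V (ι₂ B) ψy = (y : ℂ) • ψy) :
    ∀ P : H →L[ℂ] H, IsIdempotentElem P → IsSelfAdjoint P →
      ‖⟪ψx, qop V (ι₁ P) ψy⟫_ℂ‖ ≤
        (Real.sqrt ‖qop V (ι₂ (B ^ 2)) - qop V (ι₂ B) ^ 2‖ / |x - y|) /
          Real.sqrt (1 + 4 * (Real.sqrt ‖qop V (ι₂ (B ^ 2)) - qop V (ι₂ B) ^ 2‖ / |x - y|) ^ 2) := by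
  intro P hPidem hPsa
  -- basic inner-product facts for V
  have hVin : ∀ u v : H, ⟪V u, V v⟫_ℂ = ⟪u, v⟫_ℂ := by
    intro u v
    have h := congrArg (fun (T : H →L[ℂ] H) => ⟪u, T v⟫_ℂ) hV
    simpa [ContinuousLinearMap.comp_apply, adjoint_inner_right] using h
  have hqop : ∀ (X : L →L[ℂ] L) (u v : H), ⟪u, qop V X v⟫_ℂ = ⟪V u, X (V v)⟫_ℂ := by
    intro X u v
    simp [qop, ContinuousLinearMap.comp_apply, adjoint_inner_right]
  set Bt := ι₂ B with hBtdef
  have hBtsa : ∀ v w : L, ⟪Bt v, w⟫_ℂ = ⟪v, Bt w⟫_ℂ := by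
    intro v w
    have h1 : IsSelfAdjoint Bt := hB.map ι₂
    rw [← ContinuousLinearMap.adjoint_inner_left]
    rw [isSelfAdjoint_iff' ] at h1
    rw [h1]
  set Q := ι₁ P with hQdef
  have hQsa : ∀ v w : L, ⟪Q v, w⟫_ℂ = ⟪v, Q w⟫_ℂ := by
    intro v w
    have h1 : IsSelfAdjoint Q := hPsa.map ι₁
    rw [← ContinuousLinearMap.adjoint_inner_left]
    rw [isSelfAdjoint_iff'] at h1
    rw [h1]
  have hQidem : ∀ v : L, Q (Q v) = Q v := by
    intro v
    have : Q * Q = Q := by rw [hQdef, ← map_mul]; exact congrArg _ hPidem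
    calc Q (Q v) = (Q * Q) v := rfl
    _ = Q v := by rw [this]
  have hQBt : ∀ v : L, Q (Bt v) = Bt (Q v) := by
    intro v
    have := hcomm P B
    calc Q (Bt v) = (ι₁ P * ι₂ B) v := rfl
    _ = (ι₂ B * ι₁ P) v := by rw [this]
    _ = Bt (Q v) := rfl
  set φx := V ψx with hφxdef
  set φy := V ψy with hφydef
  have hψxψx : ⟪ψx, ψx⟫_ℂ = 1 := by
    rw [inner_self_eq_norm_sq_to_K, hψx]; norm_num
  have hψyψy : ⟪ψy, ψy⟫_ℂ = 1 := by
    rw [inner_self_eq_norm_sq_to_K, hψy]; norm_num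
  have hφxφx : ⟪φx, φx⟫_ℂ = 1 := by rw [hVin]; exact hψxψx
  have hφyφy : ⟪φy, φy⟫_ℂ = 1 := by rw [hVin]; exact hψyψy
  -- orthogonality of ψx ψy
  have hxA : ⟪φx, Bt φx⟫_ℂ = (x : ℂ) := by
    rw [← hqop, hx, inner_smul_right, hψxψx, mul_one]
  have hyA : ⟪φy, Bt φy⟫_ℂ = (y : ℂ) := by
    rw [← hqop, hy, inner_smul_right, hψyψy, mul_one]
  have hortho : ⟪ψx, ψy⟫_ℂ = 0 := by
    have h1 : ⟪φx, Bt φy⟫_ℂ = (y : ℂ) * ⟪ψx, ψy⟫_ℂ := by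
      rw [← hqop, hy, inner_smul_right]
    have h2 : ⟪φx, Bt φy⟫_ℂ = (x : ℂ) * ⟪ψx, ψy⟫_ℂ := by
      rw [← hBtsa]
      calc ⟪Bt φx, φy⟫_ℂ = (starRingEnd ℂ) ⟪φy, Bt φx⟫_ℂ := (inner_conj_symm _ _).symm
      _ = (starRingEnd ℂ) ((x : ℂ) * ⟪ψy, ψx⟫_ℂ) := by rw [← hqop, hx, inner_smul_right]
      _ = (x : ℂ) * ⟪ψx, ψy⟫_ℂ := by
            rw [map_mul, inner_conj_symm, Complex.conj_ofReal]
    have h3 : ((x : ℂ) - y) * ⟪ψx, ψy⟫_ℂ = 0 := by rw [sub_mul, ← h1, ← h2, sub_self]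
    have h4 : ((x : ℂ) - y) ≠ 0 := by
      simp only [sub_ne_zero, Ne, Complex.ofReal_inj]
      exact hxy
    exact (mul_eq_zero.mp h3).resolve_left h4
  have hφortho : ⟪φx, φy⟫_ℂ = 0 := by rw [hVin]; exact hortho
  have hφBt0 : ⟪φx, Bt φy⟫_ℂ = 0 := by
    rw [← hqop, hy, inner_smul_right, hortho, mul_zero]
  -- deviation vectors
  set Dx := Bt φx - (x : ℂ) • φx with hDxdef
  set Dy := Bt φy - (y : ℂ) • φy with hDydef
  have hDxφx : ⟪φx, Dx⟫_ℂ = 0 := by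
    rw [hDxdef, inner_sub_right, inner_smul_right, hxA, hφxφx, mul_one, sub_self]
  have hDyφy : ⟪φy, Dy⟫_ℂ = 0 := by
    rw [hDydef, inner_sub_right, inner_smul_right, hyA, hφyφy, mul_one, sub_self]
  set N := ‖qop V (ι₂ (B ^ 2)) - qop V (ι₂ B) ^ 2‖ with hNdef
  have hN0 : 0 ≤ N := norm_nonneg _
  set M := qop V (ι₂ (B ^ 2)) - qop V (ι₂ B) ^ 2 with hMdef
  -- the squared norm of Dx equals ⟪ψx, M ψx⟫
  have hBtsq : ∀ v : L, ι₂ (B ^ 2) v = Bt (Bt v) := by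
    intro v
    rw [map_pow]
    rfl
  have hBtφxφx : ⟪Bt φx, φx⟫_ℂ = (x : ℂ) := by
    rw [← inner_conj_symm, hxA, Complex.conj_ofReal]
  have hBtφyφy : ⟪Bt φy, φy⟫_ℂ = (y : ℂ) := by
    rw [← inner_conj_symm, hyA, Complex.conj_ofReal]
  have hDxM : ⟪Dx, Dx⟫_ℂ = ⟪ψx, M ψx⟫_ℂ := by
    have e1 : ⟪Bt φx, Bt φx⟫_ℂ = ⟪ψx, qop V (ι₂ (B ^ 2)) ψx⟫_ℂ := by
      rw [hqop, hBtsq, hBtsa]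
    have e2 : ⟪ψx, (qop V (ι₂ B) ^ 2) ψx⟫_ℂ = (x : ℂ) ^ 2 := by
      have h5 : (qop V (ι₂ B) ^ 2) ψx = qop V (ι₂ B) (qop V (ι₂ B) ψx) := by
        rw [sq]; rfl
      rw [h5, hx, map_smul, hx, inner_smul_right, inner_smul_right, hψxψx]
      ring
    have e3 : ⟪ψx, M ψx⟫_ℂ = ⟪ψx, qop V (ι₂ (B ^ 2)) ψx⟫_ℂ - (x : ℂ) ^ 2 := by
      calc ⟪ψx, M ψx⟫_ℂ
          = ⟪ψx, qop V (ι₂ (B ^ 2)) ψx - (qop V (ι₂ B) ^ 2) ψx⟫_ℂ := rfl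
        _ = ⟪ψx, qop V (ι₂ (B ^ 2)) ψx⟫_ℂ - ⟪ψx, (qop V (ι₂ B) ^ 2) ψx⟫_ℂ :=
            inner_sub_right _ _ _
        _ = _ := by rw [e2]
    have e4 : ⟪Dx, Dx⟫_ℂ = ⟪Bt φx, Bt φx⟫_ℂ - (x : ℂ) ^ 2 := by
      calc ⟪Dx, Dx⟫_ℂ
          = ⟪Bt φx - (x : ℂ) • φx, Bt φx - (x : ℂ) • φx⟫_ℂ := rfl
        _ = _ := by
            simp only [inner_sub_left, inner_sub_right, inner_smul_left,
              inner_smul_right, hxA, hBtφxφx, hφxφx, Complex.conj_ofReal]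
            ring
    rw [e3, e4, e1]
  have hDyM : ⟪Dy, Dy⟫_ℂ = ⟪ψy, M ψy⟫_ℂ := by
    have e1 : ⟪Bt φy, Bt φy⟫_ℂ = ⟪ψy, qop V (ι₂ (B ^ 2)) ψy⟫_ℂ := by
      rw [hqop, hBtsq, hBtsa]
    have e2 : ⟪ψy, (qop V (ι₂ B) ^ 2) ψy⟫_ℂ = (y : ℂ) ^ 2 := by
      have h5 : (qop V (ι₂ B) ^ 2) ψy = qop V (ι₂ B) (qop V (ι₂ B) ψy) := by
        rw [sq]; rfl
      rw [h5, hy, map_smul, hy, inner_smul_right, inner_smul_right, hψyψy]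
      ring
    have e3 : ⟪ψy, M ψy⟫_ℂ = ⟪ψy, qop V (ι₂ (B ^ 2)) ψy⟫_ℂ - (y : ℂ) ^ 2 := by
      calc ⟪ψy, M ψy⟫_ℂ
          = ⟪ψy, qop V (ι₂ (B ^ 2)) ψy - (qop V (ι₂ B) ^ 2) ψy⟫_ℂ := rfl
        _ = ⟪ψy, qop V (ι₂ (B ^ 2)) ψy⟫_ℂ - ⟪ψy, (qop V (ι₂ B) ^ 2) ψy⟫_ℂ :=
            inner_sub_right _ _ _
        _ = _ := by rw [e2]
    have e4 : ⟪Dy, Dy⟫_ℂ = ⟪Bt φy, Bt φy⟫_ℂ - (y : ℂ) ^ 2 := by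
      calc ⟪Dy, Dy⟫_ℂ
          = ⟪Bt φy - (y : ℂ) • φy, Bt φy - (y : ℂ) • φy⟫_ℂ := rfl
        _ = _ := by
            simp only [inner_sub_left, inner_sub_right, inner_smul_left,
              inner_smul_right, hyA, hBtφyφy, hφyφy, Complex.conj_ofReal]
            ring
    rw [e3, e4, e1]
  have hDxN : ‖Dx‖ ≤ Real.sqrt N := by
    have h1 : ‖Dx‖ ^ 2 = RCLike.re ⟪Dx, Dx⟫_ℂ := (inner_self_eq_norm_sq (𝕜 := ℂ) Dx).symm
    have h2 : RCLike.re ⟪ψx, M ψx⟫_ℂ ≤ N := by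
      calc RCLike.re ⟪ψx, M ψx⟫_ℂ ≤ ‖⟪ψx, M ψx⟫_ℂ‖ := RCLike.re_le_norm _
      _ ≤ ‖ψx‖ * ‖M ψx‖ := norm_inner_le_norm _ _
      _ ≤ ‖ψx‖ * (‖M‖ * ‖ψx‖) := by
            gcongr; exact M.le_opNorm ψx
      _ = N := by rw [hψx]; ring
    have h3 : ‖Dx‖ ^ 2 ≤ N := by rw [h1, hDxM]; exact h2
    have := Real.sqrt_le_sqrt h3
    rwa [Real.sqrt_sq (norm_nonneg _)] at this
  have hDyN : ‖Dy‖ ≤ Real.sqrt N := by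
    have h1 : ‖Dy‖ ^ 2 = RCLike.re ⟪Dy, Dy⟫_ℂ := (inner_self_eq_norm_sq (𝕜 := ℂ) Dy).symm
    have h2 : RCLike.re ⟪ψy, M ψy⟫_ℂ ≤ N := by
      calc RCLike.re ⟪ψy, M ψy⟫_ℂ ≤ ‖⟪ψy, M ψy⟫_ℂ‖ := RCLike.re_le_norm _
      _ ≤ ‖ψy‖ * ‖M ψy‖ := norm_inner_le_norm _ _
      _ ≤ ‖ψy‖ * (‖M‖ * ‖ψy‖) := by
            gcongr; exact M.le_opNorm ψy
      _ = N := by rw [hψy]; ring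
    have h3 : ‖Dy‖ ^ 2 ≤ N := by rw [h1, hDyM]; exact h2
    have := Real.sqrt_le_sqrt h3
    rwa [Real.sqrt_sq (norm_nonneg _)] at this
  -- reflection vectors
  set χx := (2 : ℂ) • Q φx - φx with hχxdef
  set χy := (2 : ℂ) • Q φy - φy with hχydef
  set β := ⟪φx, χy⟫_ℂ with hβdef
  set c := ⟪φx, Q φy⟫_ℂ with hcdef
  have hβc : β = 2 * c := by
    rw [hβdef, hχydef, inner_sub_right, inner_smul_right, hφortho, sub_zero, hcdef]
  -- the goal's inner product is c
  have hgoalc : ⟪ψx, qop V (ι₁ P) ψy⟫_ℂ = c := hqop _ _ _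
  -- properties of the reflection vectors
  have hconj2 : (starRingEnd ℂ) (2:ℂ) = 2 := map_ofNat _ 2
  have hQQy : ⟪Q φy, Q φy⟫_ℂ = ⟪φy, Q φy⟫_ℂ := by rw [hQsa, hQidem]
  have hQ1y : ⟪Q φy, φy⟫_ℂ = ⟪φy, Q φy⟫_ℂ := hQsa _ _
  have hQQx : ⟪Q φx, Q φx⟫_ℂ = ⟪φx, Q φx⟫_ℂ := by rw [hQsa, hQidem]
  have hQ1x : ⟪Q φx, φx⟫_ℂ = ⟪φx, Q φx⟫_ℂ := hQsa _ _
  have hχyn : ⟪χy, χy⟫_ℂ = 1 := by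
    calc ⟪χy, χy⟫_ℂ = ⟪(2:ℂ) • Q φy - φy, (2:ℂ) • Q φy - φy⟫_ℂ := rfl
      _ = 1 := by
          simp only [inner_sub_left, inner_sub_right, inner_smul_left,
            inner_smul_right, hconj2, hQQy, hQ1y, hφyφy]
          ring
  have hχxn : ⟪χx, χx⟫_ℂ = 1 := by
    calc ⟪χx, χx⟫_ℂ = ⟪(2:ℂ) • Q φx - φx, (2:ℂ) • Q φx - φx⟫_ℂ := rfl
      _ = 1 := by
          simp only [inner_sub_left, inner_sub_right, inner_smul_left,
            inner_smul_right, hconj2, hQQx, hQ1x, hφxφx]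
          ring
  have hφyχx : ⟪φy, χx⟫_ℂ = (starRingEnd ℂ) β := by
    have h1 : ⟪φy, Q φx⟫_ℂ = (starRingEnd ℂ) ⟪φx, Q φy⟫_ℂ := by
      rw [← inner_conj_symm, hQsa]
    have h2 : ⟪φy, φx⟫_ℂ = 0 := by rw [← inner_conj_symm, hφortho, map_zero]
    calc ⟪φy, χx⟫_ℂ = ⟪φy, (2:ℂ) • Q φx - φx⟫_ℂ := rfl
      _ = (2:ℂ) * ⟪φy, Q φx⟫_ℂ - ⟪φy, φx⟫_ℂ := by
          rw [inner_sub_right, inner_smul_right]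
      _ = (starRingEnd ℂ) β := by
          rw [h1, h2, hβc, hcdef, map_mul, map_ofNat]; ring
  have hχyφx : ⟪χy, φx⟫_ℂ = (starRingEnd ℂ) β := by
    rw [← inner_conj_symm, hβdef]
  -- key identity
  have hUsa : ∀ v w : L, ⟪(2:ℂ) • Q v - v, w⟫_ℂ = ⟪v, (2:ℂ) • Q w - w⟫_ℂ := by
    intro v w
    simp only [inner_sub_left, inner_sub_right, inner_smul_left,
      inner_smul_right, hconj2, hQsa]
  have hstep : (2:ℂ) • Q Dy - Dy = Bt χy - (y:ℂ) • χy := by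
    simp only [hDydef, hχydef, map_sub, map_smul, hQBt]
    module
  have hBtφxd : Bt φx = Dx + (x:ℂ) • φx := by rw [hDxdef]; abel
  have hkey : ⟪χx, Dy⟫_ℂ - ⟪Dx, χy⟫_ℂ = ((x:ℂ) - y) * β := by
    have h6 : ⟪φx, Bt χy⟫_ℂ = ⟪Dx, χy⟫_ℂ + (x:ℂ) * β := by
      rw [← hBtsa, hBtφxd, inner_add_left, inner_smul_left, Complex.conj_ofReal,
        hβdef]
    have h7 : ⟪χx, Dy⟫_ℂ = ⟪φx, Bt χy - (y:ℂ) • χy⟫_ℂ := by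
      calc ⟪χx, Dy⟫_ℂ = ⟪(2:ℂ) • Q φx - φx, Dy⟫_ℂ := rfl
        _ = ⟪φx, (2:ℂ) • Q Dy - Dy⟫_ℂ := hUsa _ _
        _ = _ := by rw [hstep]
    rw [h7, inner_sub_right, inner_smul_right, h6, hβdef]
    ring
  -- norms of φ and χ
  have hnorm1 : ∀ v : L, ⟪v, v⟫_ℂ = 1 → ‖v‖ = 1 := by
    intro v hv
    have h := inner_self_eq_norm_sq (𝕜 := ℂ) v
    rw [hv] at h
    norm_num at h
    have h3 : ‖v‖ ^ 2 = 1 ^ 2 := by rw [one_pow, ← h]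
    exact (pow_left_inj₀ (norm_nonneg v) zero_le_one two_ne_zero).mp h3
  have hφxn : ‖φx‖ = 1 := hnorm1 _ hφxφx
  have hχynn : ‖χy‖ = 1 := hnorm1 _ hχyn
  have hχxnn : ‖χx‖ = 1 := hnorm1 _ hχxn
  set b := ‖β‖ with hbdef
  have hb0 : 0 ≤ b := norm_nonneg _
  have hb1 : b ≤ 1 := by
    have := norm_inner_le_norm (𝕜 := ℂ) φx χy
    rwa [hφxn, hχynn, one_mul, ← hβdef, ← hbdef] at this
  -- component bounds
  have hwbound : ∀ (χ φ : L) (γ : ℂ) (D : L), ⟪χ, χ⟫_ℂ = 1 → ⟪φ, φ⟫_ℂ = 1 →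
      ⟪φ, χ⟫_ℂ = γ → ⟪D, φ⟫_ℂ = 0 → ‖γ‖ = b →
      ‖⟪D, χ⟫_ℂ‖ ≤ ‖D‖ * Real.sqrt (1 - b ^ 2) := by
    intro χ φ γ D hχ hφ hγ hD hγb
    have hw : ⟪D, χ⟫_ℂ = ⟪D, χ - γ • φ⟫_ℂ := by
      rw [inner_sub_right, inner_smul_right, hD, mul_zero, sub_zero]
    have hwn : ‖χ - γ • φ‖ ^ 2 = 1 - b ^ 2 := by
      have hχφ : ⟪χ, φ⟫_ℂ = (starRingEnd ℂ) γ := by rw [← inner_conj_symm, hγ]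
      have e : ⟪χ - γ • φ, χ - γ • φ⟫_ℂ = 1 - (b:ℂ) ^ 2 := by
        simp only [inner_sub_left, inner_sub_right, inner_smul_left,
          inner_smul_right, hχ, hφ, hγ, hχφ]
        have : γ * (starRingEnd ℂ) γ = (b:ℂ) ^ 2 := by
          rw [Complex.mul_conj, ← hγb, Complex.normSq_eq_norm_sq]
          norm_cast
        rw [mul_one]
        rw [show (starRingEnd ℂ) γ * γ = γ * (starRingEnd ℂ) γ from mul_comm _ _]
        rw [this]
        ring
      have h := inner_self_eq_norm_sq (𝕜 := ℂ) (χ - γ • φ)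
      rw [e] at h
      norm_num [← Complex.ofReal_pow] at h
      linarith
    have hwn' : ‖χ - γ • φ‖ = Real.sqrt (1 - b ^ 2) := by
      rw [← hwn, Real.sqrt_sq (norm_nonneg _)]
    calc ‖⟪D, χ⟫_ℂ‖ = ‖⟪D, χ - γ • φ⟫_ℂ‖ := by rw [hw]
      _ ≤ ‖D‖ * ‖χ - γ • φ‖ := norm_inner_le_norm _ _
      _ = ‖D‖ * Real.sqrt (1 - b ^ 2) := by rw [hwn']
  have hDxχy : ‖⟪Dx, χy⟫_ℂ‖ ≤ Real.sqrt N * Real.sqrt (1 - b ^ 2) := by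
    have hDφ : ⟪Dx, φx⟫_ℂ = 0 := by rw [← inner_conj_symm, hDxφx, map_zero]
    have := hwbound χy φx β Dx hχyn hφxφx hβdef.symm hDφ rfl
    calc ‖⟪Dx, χy⟫_ℂ‖ ≤ ‖Dx‖ * Real.sqrt (1 - b ^ 2) := this
      _ ≤ Real.sqrt N * Real.sqrt (1 - b ^ 2) := by
          gcongr
  have hχxDy : ‖⟪χx, Dy⟫_ℂ‖ ≤ Real.sqrt N * Real.sqrt (1 - b ^ 2) := by
    have hDφ : ⟪Dy, φy⟫_ℂ = 0 := by rw [← inner_conj_symm, hDyφy, map_zero]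
    have hβn : ‖(starRingEnd ℂ) β‖ = b := by rw [RingHomIsometric.norm_map]
    have h := hwbound χx φy ((starRingEnd ℂ) β) Dy hχxn hφyφy hφyχx hDφ hβn
    calc ‖⟪χx, Dy⟫_ℂ‖ = ‖(starRingEnd ℂ) ⟪χx, Dy⟫_ℂ‖ := by
          rw [RingHomIsometric.norm_map]
      _ = ‖⟪Dy, χx⟫_ℂ‖ := by rw [inner_conj_symm]
      _ ≤ ‖Dy‖ * Real.sqrt (1 - b ^ 2) := h
      _ ≤ Real.sqrt N * Real.sqrt (1 - b ^ 2) := by gcongr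
  -- the main inequality
  have hmain : |x - y| * b ≤ 2 * Real.sqrt N * Real.sqrt (1 - b ^ 2) := by
    have h1 : ‖((x:ℂ) - y) * β‖ = |x - y| * b := by
      rw [norm_mul, hbdef]
      congr 1
      rw [show ((x:ℂ) - y) = ((x - y : ℝ) : ℂ) by push_cast; ring,
        Complex.norm_real, Real.norm_eq_abs]
    calc |x - y| * b = ‖⟪χx, Dy⟫_ℂ - ⟪Dx, χy⟫_ℂ‖ := by rw [hkey, h1]
      _ ≤ ‖⟪χx, Dy⟫_ℂ‖ + ‖⟪Dx, χy⟫_ℂ‖ := norm_sub_le _ _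
      _ ≤ 2 * Real.sqrt N * Real.sqrt (1 - b ^ 2) := by
          have := add_le_add hχxDy hDxχy
          linarith
  rw [hgoalc]
  have hcb : ‖c‖ = b / 2 := by
    rw [hbdef, hβc, norm_mul]
    norm_num
  rw [hcb]
  exact coherence_aux b |x - y| (Real.sqrt N) hb0 hb1
    (abs_pos.mpr (sub_ne_zero.mpr hxy)) (Real.sqrt_nonneg _) hmain
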